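/- Let G be a finite simple graph with global ℓth-order clustering coefficient C_ℓ < 1, and let a > 1 with a·C_ℓ > 1. Then there exists a vertex u such that both cut_{K_ℓ}(N'_u) ≤ a·(1 - C_ℓ)·|W_ℓ(u)| and C_ℓ(u) ≥ (a·C_ℓ - 1)/(a - 1), where |W_ℓ(u)| is the number of ℓ-wedges centered at u and C_ℓ(u) the local ℓth-order clustering coefficient. -/

import Mathlib

/-- The set of `ℓ`-wedges of `G`: pairs of an `ℓ`-clique `p.1` and an adjacent edge, given
by the shared vertex `p.2.1 ∈ p.1` and an outside endpoint `p.2.2 ∉ p.1`. -/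
def wedges {V : Type*} (G : SimpleGraph V) (ℓ : ℕ) : Set (Finset V × V × V) :=
  {p | G.IsNClique ℓ p.1 ∧ p.2.1 ∈ p.1 ∧ p.2.2 ∉ p.1 ∧ G.Adj p.2.1 p.2.2}

/-- The set of closed `ℓ`-wedges: the clique together with the outside endpoint forms an
`(ℓ+1)`-clique. -/
def closedWedges {V : Type*} [DecidableEq V] (G : SimpleGraph V) (ℓ : ℕ) :
    Set (Finset V × V × V) :=
  wedges G ℓ ∩ {p | G.IsNClique (ℓ + 1) (insert p.2.2 p.1)}

/-- The global `ℓ`th-order clustering coefficient: the fraction of `ℓ`-wedges that are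
closed. -/
noncomputable def globalCC {V : Type*} [Fintype V] [DecidableEq V]
    (G : SimpleGraph V) (ℓ : ℕ) : ℝ :=
  ((closedWedges G ℓ).ncard : ℝ) / ((wedges G ℓ).ncard : ℝ)

/-- The number of `ℓ`-cliques cut by the partition `(N'_v, complement)`, where
`N'_v = {v} ∪ neighbors(v)`. -/
noncomputable def nbrCut {V : Type*} [Fintype V] (G : SimpleGraph V) (ℓ : ℕ) (v : V) : ℕ :=
  {s : Finset V | G.IsNClique ℓ s ∧
    (∃ x ∈ s, x ∈ insert v (G.neighborSet v)) ∧
    (∃ x ∈ s, x ∉ insert v (G.neighborSet v))}.ncard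

/-- The set of `ℓ`-wedges centered at `u`: an `ℓ`-clique containing `u` together with an
edge from `u` to an outside vertex. -/
def wedgesAt {V : Type*} (G : SimpleGraph V) (ℓ : ℕ) (u : V) : Set (Finset V × V) :=
  {p | G.IsNClique ℓ p.1 ∧ u ∈ p.1 ∧ p.2 ∉ p.1 ∧ G.Adj u p.2}

/-- The set of closed `ℓ`-wedges centered at `u`. -/
def closedWedgesAt {V : Type*} [DecidableEq V] (G : SimpleGraph V) (ℓ : ℕ) (u : V) :
    Set (Finset V × V) :=
  wedgesAt G ℓ u ∩ {p | G.IsNClique (ℓ + 1) (insert p.2 p.1)}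

/-- The local `ℓ`th-order clustering coefficient of `u`: the fraction of `ℓ`-wedges
centered at `u` that are closed. -/
noncomputable def localCC {V : Type*} [Fintype V] [DecidableEq V]
    (G : SimpleGraph V) (ℓ : ℕ) (u : V) : ℝ :=
  ((closedWedgesAt G ℓ u).ncard : ℝ) / ((wedgesAt G ℓ u).ncard : ℝ)

section Aux

variable {V : Type*} [Fintype V] [DecidableEq V] (G : SimpleGraph V) (ℓ : ℕ)

lemma aux_fiber1 (u : V) :
    ((wedges G ℓ).toFinite.toFinset.filter (fun p => p.2.1 = u)).card
      = (wedgesAt G ℓ u).ncard := by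
  classical
  rw [Set.ncard_eq_toFinset_card _ (Set.toFinite _)]
  refine Finset.card_bij' (fun p _ => (p.1, p.2.2)) (fun q _ => (q.1, u, q.2))
    ?_ ?_ ?_ ?_
  · intro p hp
    simp only [Finset.mem_filter, Set.Finite.mem_toFinset, wedges, Set.mem_setOf_eq] at hp
    obtain ⟨⟨h1, h2, h3, h4⟩, h5⟩ := hp
    subst h5
    exact (Set.Finite.mem_toFinset _).mpr ⟨h1, h2, h3, h4⟩
  · intro q hq
    rw [Set.Finite.mem_toFinset] at hq
    obtain ⟨h1, h2, h3, h4⟩ := hq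
    refine Finset.mem_filter.mpr ⟨(Set.Finite.mem_toFinset _).mpr ⟨h1, h2, h3, h4⟩, rfl⟩
  · rintro ⟨s, x, y⟩ hp
    obtain ⟨-, h5⟩ := Finset.mem_filter.mp hp
    simp only at h5
    subst h5
    rfl
  · intro q hq; rfl

lemma aux_fiber2 (u : V) :
    ((closedWedges G ℓ).toFinite.toFinset.filter (fun p => p.2.1 = u)).card
      = (closedWedgesAt G ℓ u).ncard := by
  classical
  rw [Set.ncard_eq_toFinset_card _ (Set.toFinite _)]
  refine Finset.card_bij' (fun p _ => (p.1, p.2.2)) (fun q _ => (q.1, u, q.2))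
    ?_ ?_ ?_ ?_
  · intro p hp
    simp only [Finset.mem_filter, Set.Finite.mem_toFinset, closedWedges, wedges,
      Set.mem_inter_iff, Set.mem_setOf_eq] at hp
    obtain ⟨⟨⟨h1, h2, h3, h4⟩, hcl⟩, h5⟩ := hp
    subst h5
    rw [Set.Finite.mem_toFinset]
    exact ⟨⟨h1, h2, h3, h4⟩, hcl⟩
  · intro q hq
    rw [Set.Finite.mem_toFinset] at hq
    obtain ⟨⟨h1, h2, h3, h4⟩, hcl⟩ := hq
    refine Finset.mem_filter.mpr ⟨(Set.Finite.mem_toFinset _).mpr ⟨⟨h1, h2, h3, h4⟩, hcl⟩, rfl⟩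
  · rintro ⟨s, x, y⟩ hp
    obtain ⟨-, h5⟩ := Finset.mem_filter.mp hp
    simp only at h5
    subst h5
    rfl
  · intro q hq; rfl

lemma aux_sum_wedges :
    (wedges G ℓ).ncard = ∑ u : V, (wedgesAt G ℓ u).ncard := by
  classical
  rw [Set.ncard_eq_toFinset_card _ (Set.toFinite _)]
  rw [Finset.card_eq_sum_card_fiberwise (f := fun p => p.2.1) (t := Finset.univ)
    (fun x _ => Finset.mem_univ _)]
  exact Finset.sum_congr rfl fun u _ => aux_fiber1 G ℓ u

lemma aux_sum_closed :
    (closedWedges G ℓ).ncard = ∑ u : V, (closedWedgesAt G ℓ u).ncard := by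
  classical
  rw [Set.ncard_eq_toFinset_card _ (Set.toFinite _)]
  rw [Finset.card_eq_sum_card_fiberwise (f := fun p => p.2.1) (t := Finset.univ)
    (fun x _ => Finset.mem_univ _)]
  exact Finset.sum_congr rfl fun u _ => aux_fiber2 G ℓ u

lemma aux_cAt_le (u : V) : (closedWedgesAt G ℓ u).ncard ≤ (wedgesAt G ℓ u).ncard :=
  Set.ncard_le_ncard (fun _ hp => hp.1) (Set.toFinite _)

/-- Per-vertex: the cut cliques inject into open wedges with outside endpoint `u`. -/
lemma aux_cut_le (u : V) :
    nbrCut G ℓ u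
    ≤ (((wedges G ℓ).toFinite.toFinset \ (closedWedges G ℓ).toFinite.toFinset).filter
        (fun p => p.2.2 = u)).card := by
  classical
  rw [nbrCut, Set.ncard_eq_toFinset_card _ (Set.toFinite _)]
  apply Finset.card_le_card_of_injOn
    (f := fun s => (s, if h : ∃ x ∈ s, G.Adj u x then h.choose else u, u))
  · intro s hs
    rw [Finset.mem_coe, Set.Finite.mem_toFinset, Set.mem_setOf_eq] at hs
    obtain ⟨hcl, ⟨x, hxs, hxN⟩, ⟨y, hys, hyN⟩⟩ := hs
    have hus : u ∉ s := by
      intro hus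
      apply hyN
      rcases eq_or_ne y u with rfl | hne
      · exact Set.mem_insert _ _
      · exact Set.mem_insert_of_mem _
          (hcl.1 (by exact_mod_cast hus) (by exact_mod_cast hys) (fun h => hne h.symm))
    have hP : ∃ x ∈ s, G.Adj u x := by
      refine ⟨x, hxs, ?_⟩
      rcases Set.mem_insert_iff.mp hxN with h | h
      · exact absurd (h ▸ hxs) hus
      · exact h
    beta_reduce
    rw [Finset.mem_coe, dif_pos hP]
    obtain ⟨hx0s, hx0adj⟩ := hP.choose_spec
    refine Finset.mem_filter.mpr ⟨Finset.mem_sdiff.mpr ⟨?_, ?_⟩, rfl⟩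
    · exact (Set.Finite.mem_toFinset _).mpr ⟨hcl, hx0s, hus, hx0adj.symm⟩
    · rw [Set.Finite.mem_toFinset]
      intro hcl'
      obtain ⟨hclq, -⟩ := hcl'.2
      apply hyN
      refine Set.mem_insert_of_mem _ ?_
      have hadj : G.Adj u y :=
        hclq (by simp) (by simp [hys]) (by rintro rfl; exact hus hys)
      exact hadj
  · intro s hs s' hs' h
    exact congrArg Prod.fst h

lemma aux_closed_card_le : (closedWedges G ℓ).ncard ≤ (wedges G ℓ).ncard :=
  Set.ncard_le_ncard (fun _ hp => hp.1) (Set.toFinite _)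

lemma aux_sum_cut :
    (∑ u : V, nbrCut G ℓ u)
    ≤ (wedges G ℓ).ncard - (closedWedges G ℓ).ncard := by
  classical
  have hsub : (closedWedges G ℓ).toFinite.toFinset ⊆ (wedges G ℓ).toFinite.toFinset := by
    intro p hp
    rw [Set.Finite.mem_toFinset] at *
    exact hp.1
  have h1 : (∑ u : V, nbrCut G ℓ u)
      ≤ ∑ u : V, (((wedges G ℓ).toFinite.toFinset \
          (closedWedges G ℓ).toFinite.toFinset).filter (fun p => p.2.2 = u)).card :=
    Finset.sum_le_sum fun u _ => aux_cut_le G ℓ u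
  have h2 : ((wedges G ℓ).toFinite.toFinset \ (closedWedges G ℓ).toFinite.toFinset).card
      = ∑ u : V, (((wedges G ℓ).toFinite.toFinset \
          (closedWedges G ℓ).toFinite.toFinset).filter (fun p => p.2.2 = u)).card :=
    Finset.card_eq_sum_card_fiberwise (f := fun p : Finset V × V × V => p.2.2) (t := Finset.univ)
      (fun x _ => Finset.mem_univ _)
  have h3 : ((wedges G ℓ).toFinite.toFinset \ (closedWedges G ℓ).toFinite.toFinset).card
      = (wedges G ℓ).ncard - (closedWedges G ℓ).ncard := by
    rw [Finset.card_sdiff_of_subset hsub, Set.ncard_eq_toFinset_card _ (Set.toFinite _),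
      Set.ncard_eq_toFinset_card _ (Set.toFinite _)]
  omega

end Aux

theorem stmt_17 {V : Type*} [Fintype V] [DecidableEq V] (G : SimpleGraph V) (ℓ : ℕ)
    (hW : 0 < (wedges G ℓ).ncard) (hC : globalCC G ℓ < 1)
    (a : ℝ) (ha : 1 < a) (haC : 1 < a * globalCC G ℓ) :
    ∃ u : V,
      (nbrCut G ℓ u : ℝ) ≤ a * (1 - globalCC G ℓ) * ((wedgesAt G ℓ u).ncard : ℝ) ∧
      localCC G ℓ u ≥ (a * globalCC G ℓ - 1) / (a - 1) := by
  classical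
  by_contra hcon
  push_neg at hcon
  set C := globalCC G ℓ with hCdef
  set θ := (a * C - 1) / (a - 1) with hθdef
  have ha0 : (0:ℝ) < a := by linarith
  have ha1 : (0:ℝ) < a - 1 := by linarith
  set Wr : ℝ := ((wedges G ℓ).ncard : ℝ) with hWrdef
  set Cr : ℝ := ((closedWedges G ℓ).ncard : ℝ) with hCrdef
  have hWpos : (0:ℝ) < Wr := by rw [hWrdef]; exact_mod_cast hW
  set w : V → ℝ := fun u => ((wedgesAt G ℓ u).ncard : ℝ) with hwdef
  set c : V → ℝ := fun u => ((closedWedgesAt G ℓ u).ncard : ℝ) with hcdef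
  set k : V → ℝ := fun u => ((nbrCut G ℓ u : ℝ)) with hkdef
  have hwnn : ∀ u, 0 ≤ w u := fun u => Nat.cast_nonneg _
  have hknn : ∀ u, 0 ≤ k u := fun u => Nat.cast_nonneg _
  have hcnn : ∀ u, 0 ≤ c u := fun u => Nat.cast_nonneg _
  have hcw : ∀ u, c u ≤ w u := fun u => by
    show ((closedWedgesAt G ℓ u).ncard : ℝ) ≤ ((wedgesAt G ℓ u).ncard : ℝ)
    exact_mod_cast aux_cAt_le G ℓ u
  have hsumw : ∑ u : V, w u = Wr := by
    show ∑ u : V, ((wedgesAt G ℓ u).ncard : ℝ) = ((wedges G ℓ).ncard : ℝ)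
    exact_mod_cast (aux_sum_wedges G ℓ).symm
  have hsumc : ∑ u : V, c u = Cr := by
    show ∑ u : V, ((closedWedgesAt G ℓ u).ncard : ℝ) = ((closedWedges G ℓ).ncard : ℝ)
    exact_mod_cast (aux_sum_closed G ℓ).symm
  have hCeq : Cr = C * Wr := by
    rw [hCdef]
    unfold globalCC
    rw [← hCrdef, ← hWrdef]
    field_simp
  have hC0 : 0 ≤ C := by
    rw [hCdef]; unfold globalCC; positivity
  have h1C : (0:ℝ) < 1 - C := by linarith
  have hsumk : ∑ u : V, k u ≤ Wr - Cr := by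
    have h1 := aux_sum_cut G ℓ
    have h2 := aux_closed_card_le G ℓ
    have h3 : ((∑ u : V, nbrCut G ℓ u : ℕ) : ℝ)
        ≤ (((wedges G ℓ).ncard - (closedWedges G ℓ).ncard : ℕ) : ℝ) := by exact_mod_cast h1
    rw [Nat.cast_sub h2, Nat.cast_sum] at h3
    exact h3
  set A : Finset V := Finset.univ.filter (fun u => a * (1 - C) * w u < k u) with hAdef
  have hB : ∀ u ∉ A, c u ≤ θ * w u := by
    intro u hu
    rw [hAdef, Finset.mem_filter, not_and] at hu
    have hk : k u ≤ a * (1 - C) * w u := le_of_not_gt (hu (Finset.mem_univ u))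
    have hloc : localCC G ℓ u < θ := hcon u hk
    rcases eq_or_lt_of_le (hwnn u) with hw0 | hwpos
    · have hcu : c u = 0 := le_antisymm (by linarith [hcw u]) (hcnn u)
      rw [hcu, ← hw0]
      simp
    · have hlocEq : localCC G ℓ u = c u / w u := rfl
      rw [hlocEq, div_lt_iff₀ hwpos] at hloc
      exact le_of_lt hloc
  have hSA : ∑ u ∈ A, w u < Wr / a := by
    rcases A.eq_empty_or_nonempty with h | h
    · rw [h, Finset.sum_empty]
      positivity
    · have h5 : ∑ u ∈ A, a * (1 - C) * w u < ∑ u ∈ A, k u := by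
        apply Finset.sum_lt_sum_of_nonempty h
        intro u hu
        rw [hAdef, Finset.mem_filter] at hu
        exact hu.2
      have h6 : ∑ u ∈ A, k u ≤ ∑ u : V, k u :=
        Finset.sum_le_sum_of_subset_of_nonneg (Finset.subset_univ _)
          (fun u _ _ => hknn u)
      have h7 : a * (1 - C) * ∑ u ∈ A, w u < Wr - Cr := by
        rw [Finset.mul_sum]
        linarith
      have h8 : Wr - Cr = (1 - C) * Wr := by rw [hCeq]; ring
      rw [h8] at h7
      rw [lt_div_iff₀ ha0]
      nlinarith
  have hθ1 : (0:ℝ) < 1 - θ := by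
    rw [hθdef]
    rw [sub_pos, div_lt_one ha1]
    nlinarith
  -- split the sum
  have hsplit : Cr = (∑ u ∈ Finset.univ \ A, c u) + ∑ u ∈ A, c u := by
    rw [← hsumc, Finset.sum_sdiff (Finset.subset_univ A)]
  have hsplitw : (∑ u ∈ Finset.univ \ A, w u) + ∑ u ∈ A, w u = Wr := by
    rw [← hsumw, Finset.sum_sdiff (Finset.subset_univ A)]
  have hb1 : ∑ u ∈ Finset.univ \ A, c u ≤ θ * ∑ u ∈ Finset.univ \ A, w u := by
    rw [Finset.mul_sum]
    apply Finset.sum_le_sum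
    intro u hu
    exact hB u (Finset.mem_sdiff.mp hu).2
  have hb2 : ∑ u ∈ A, c u ≤ ∑ u ∈ A, w u :=
    Finset.sum_le_sum fun u _ => hcw u
  set S := ∑ u ∈ A, w u with hSdef
  have hT : (∑ u ∈ Finset.univ \ A, w u) = Wr - S := by linarith
  have hb1' : ∑ u ∈ Finset.univ \ A, c u ≤ θ * (Wr - S) := by rw [← hT]; exact hb1
  have hCr_lt : Cr ≤ θ * (Wr - S) + S := by
    rw [hsplit]
    exact add_le_add hb1' hb2
  have hfin : θ * (Wr - S) + S < θ * Wr + (1 - θ) * (Wr / a) := by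
    have hexp : θ * (Wr - S) + S = θ * Wr + (1 - θ) * S := by ring
    rw [hexp]
    have := mul_lt_mul_of_pos_left hSA hθ1
    linarith
  have hkey : θ * Wr + (1 - θ) * (Wr / a) = C * Wr := by
    rw [hθdef]
    field_simp
    ring
  rw [hCeq] at hCr_lt
  rw [hkey] at hfin
  linarith
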